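/- Let X be a δ-hyperbolic metric space and Σ a bounded set of isometries of X. Then D(Σ) > 0 if and only if the semigroup generated by Σ contains an isometry f with d∞(f) > 0. -/

import Mathlib

open Filter Topology Function

/-- The set `Sⁿ` of all compositions of `n` elements of `S`. -/
def powSet {X : Type*} (S : Set (X → X)) (n : ℕ) : Set (X → X) :=
  {g | ∃ l : List (X → X), l.length = n ∧ (∀ f ∈ l, f ∈ S) ∧ g = l.foldr (· ∘ ·) id}

/-- The joint displacement `|S|ₓ = sup_{f ∈ S} d(fx, x)`. -/
noncomputable def dispSup {X : Type*} [MetricSpace X] (x : X) (S : Set (X → X)) : ℝ :=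
  sSup ((fun f => dist (f x) x) '' S)

/-- The stable length `d∞(f) = inf_{n ≥ 1} d(fⁿx, x)/n`
(which equals `lim_n d(fⁿx, x)/n` by Fekete's lemma). -/
noncomputable def stableLen {X : Type*} [MetricSpace X] (f : X → X) (x : X) : ℝ :=
  ⨅ n : ℕ, dist (f^[n + 1] x) x / (n + 1)

/-- The joint stable length `D(S) = inf_{n ≥ 1} |Sⁿ|ₓ / n`
(which equals `lim_n |Sⁿ|ₓ / n` by Fekete's lemma). -/
noncomputable def jointStable {X : Type*} [MetricSpace X] (S : Set (X → X)) (x : X) : ℝ :=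
  ⨅ n : ℕ, dispSup x (powSet S (n + 1)) / (n + 1)

namespace St11
variable {X : Type*} [MetricSpace X]

noncomputable def gp (z p q : X) : ℝ := (dist p z + dist q z - dist p q) / 2

omit [MetricSpace X] in
lemma foldr_comp_eq (l : List (X → X)) (c : X → X) :
    l.foldr (· ∘ ·) c = (l.foldr (· ∘ ·) id) ∘ c := by
  induction l with
  | nil => rfl
  | cons f l ih => simp [List.foldr_cons, ih]; rfl

omit [MetricSpace X] in
lemma powSet_comp {S : Set (X → X)} {u v : X → X} {m n : ℕ}
    (hu : u ∈ powSet S m) (hv : v ∈ powSet S n) : u ∘ v ∈ powSet S (m + n) := by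
  obtain ⟨l1, hl1, hm1, he1⟩ := hu
  obtain ⟨l2, hl2, hm2, he2⟩ := hv
  refine ⟨l1 ++ l2, by simp [hl1, hl2], ?_, ?_⟩
  · intro f hf; rcases List.mem_append.1 hf with h | h
    · exact hm1 f h
    · exact hm2 f h
  · rw [List.foldr_append, foldr_comp_eq, ← he2, ← he1]

omit [MetricSpace X] in
lemma powSet_split {S : Set (X → X)} {g : X → X} {m n : ℕ}
    (hg : g ∈ powSet S (m + n)) :
    ∃ u ∈ powSet S m, ∃ v ∈ powSet S n, g = u ∘ v := by
  obtain ⟨l, hl, hmem, he⟩ := hg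
  refine ⟨(l.take m).foldr (· ∘ ·) id, ⟨l.take m, ?_, ?_, rfl⟩,
          (l.drop m).foldr (· ∘ ·) id, ⟨l.drop m, ?_, ?_, rfl⟩, ?_⟩
  · rw [List.length_take, hl]; omega
  · intro f hf; exact hmem f (List.mem_of_mem_take hf)
  · rw [List.length_drop, hl]; omega
  · intro f hf; exact hmem f (List.mem_of_mem_drop hf)
  · rw [he, ← foldr_comp_eq, ← List.foldr_append, List.take_append_drop]

lemma powSet_iso {S : Set (X → X)} (hS : ∀ f ∈ S, Isometry f ∧ Function.Surjective f)
    {g : X → X} {n : ℕ} (hg : g ∈ powSet S n) : Isometry g ∧ Function.Surjective g := by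
  obtain ⟨l, _, hmem, he⟩ := hg
  subst he
  clear * - hS hmem
  induction l with
  | nil => exact ⟨isometry_id, surjective_id⟩
  | cons f l ih =>
    have hf := hS f (hmem f List.mem_cons_self)
    have hl := ih (fun f hf => hmem f (List.mem_cons_of_mem _ hf))
    exact ⟨hf.1.comp hl.1, hf.2.comp hl.2⟩

omit [MetricSpace X] in
lemma powSet_iterate {S : Set (X → X)} {f : X → X} {n : ℕ} (hf : f ∈ powSet S n) :
    ∀ k : ℕ, f^[k] ∈ powSet S (n * k) := by
  intro k
  induction k with
  | zero => exact ⟨[], by simp, by simp, rfl⟩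
  | succ k ih =>
    have h2 := powSet_comp ih hf
    have hn : n * (k + 1) = n * k + n := by ring
    rw [Function.iterate_succ, hn]
    exact h2

lemma iso_iterate {g : X → X} (hg : Isometry g) (n : ℕ) : Isometry (g^[n]) := by
  induction n with
  | zero => exact isometry_id
  | succ n ih => rw [Function.iterate_succ]; exact ih.comp hg

lemma gp_comm (z p q : X) : gp z p q = gp z q p := by
  unfold gp; rw [dist_comm p q]; ring

lemma gromov {δ : ℝ}
    (hfpc : ∀ x y s t : X, dist x y + dist s t ≤
      max (dist x s + dist y t) (dist x t + dist y s) + 2 * δ)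
    (z p q r : X) :
    min (gp z p r) (gp z r q) - δ ≤ gp z p q := by
  have h := hfpc p q r z
  rcases le_total (dist p r + dist q z) (dist p z + dist q r) with hm | hm
  · rw [max_eq_right hm] at h
    have h2 : min (gp z p r) (gp z r q) ≤ gp z r q := min_le_right _ _
    unfold gp at *
    have hc : dist r q = dist q r := dist_comm r q
    linarith
  · rw [max_eq_left hm] at h
    have h2 : min (gp z p r) (gp z r q) ≤ gp z p r := min_le_left _ _
    unfold gp at *
    linarith

lemma iter_dist {g : X → X} (hg : Isometry g) (n k : ℕ) (z : X) :
    dist (g^[n] z) (g^[n + k] z) = dist z (g^[k] z) := by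
  rw [Function.iterate_add_apply, (iso_iterate hg n).dist_eq]

/-- Chain lemma: if the square grows by more than `2δ` at some point, iterates grow
linearly. -/
lemma chain_lemma {δ : ℝ} (hδ : 0 ≤ δ)
    (hfpc : ∀ x y s t : X, dist x y + dist s t ≤
      max (dist x s + dist y t) (dist x t + dist y s) + 2 * δ)
    {g : X → X} (hg : Isometry g) (z : X) {e : ℝ}
    (he : dist (g (g z)) z = dist (g z) z + 2 * δ + e) (hepos : 0 < e) :
    ∀ n : ℕ, (n : ℝ) * e ≤ dist (g^[n] z) z := by
  set l : ℝ := dist (g z) z with hl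
  have hg1 : g^[1] z = g z := by simp
  have hg2 : g^[2] z = g (g z) := by
    show g^[1+1] z = _
    rw [Function.iterate_add_apply]; simp
  have key : ∀ n : ℕ, (n : ℝ) * e ≤ dist (g^[n] z) z ∧
      dist (g^[n] z) z + e ≤ dist (g^[n + 1] z) z := by
    intro n
    induction n with
    | zero =>
      have h2 : dist (g (g z)) z ≤ l + l := by
        have ht := dist_triangle (g (g z)) (g z) z
        have h3 : dist (g (g z)) (g z) = l := hg.dist_eq (g z) z
        linarith
      have hel : e ≤ l := by rw [he] at h2; linarith
      refine ⟨by simp, ?_⟩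
      simp only [Function.iterate_zero, id_eq, dist_self, zero_add, hg1]
      linarith
    | succ n ih =>
      obtain ⟨ih1, ih2⟩ := ih
      have hd01 : dist (g^[n] z) (g^[n + 1] z) = l := by
        rw [iter_dist hg n 1 z, hg1, dist_comm]
      have hd12 : dist (g^[n + 1] z) (g^[n + 2] z) = l := by
        rw [show n + 2 = (n + 1) + 1 from rfl, iter_dist hg (n + 1) 1 z, hg1, dist_comm]
      have hd02 : dist (g^[n] z) (g^[n + 2] z) = dist (g (g z)) z := by
        rw [iter_dist hg n 2 z, hg2, dist_comm]
      set q := g^[n + 1] z with hq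
      set P0 := g^[n] z with hP0
      set P2 := g^[n + 2] z with hP2
      have hgrom := gromov hfpc q P0 P2 z
      have hc : gp q P0 P2 = (l - e) / 2 - δ := by
        unfold gp
        rw [show dist P0 q = l from hd01,
            show dist P2 q = l from by rw [dist_comm]; exact hd12,
            show dist P0 P2 = dist (g (g z)) z from hd02, he]
        ring
      have hgl : (l + e) / 2 ≤ gp q P0 z := by
        unfold gp
        rw [show dist P0 q = l from hd01]
        have hzq : dist P0 z + e ≤ dist z q := by rw [dist_comm z q]; exact ih2
        linarith
      have hup : gp q z P2 ≤ (l - e) / 2 := by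
        by_contra hcon
        push_neg at hcon
        have hmin : (l - e) / 2 < min (gp q P0 z) (gp q z P2) := by
          apply lt_min
          · linarith
          · exact hcon
        have : (l - e) / 2 - δ < gp q P0 P2 := by linarith
        rw [hc] at this
        linarith
      have hstep : dist (g^[n + 1] z) z + e ≤ dist (g^[n + 2] z) z := by
        have hexp : gp q z P2 = (dist z q + dist P2 q - dist z P2) / 2 := rfl
        have h2q : dist P2 q = l := by rw [dist_comm]; exact hd12
        rw [hexp, h2q] at hup
        have h1 : dist z q = dist (g^[n + 1] z) z := dist_comm z q
        have h2 : dist z P2 = dist (g^[n + 2] z) z := dist_comm z P2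
        linarith
      refine ⟨?_, hstep⟩
      push_cast
      calc ((n : ℝ) + 1) * e = (n : ℝ) * e + e := by ring
        _ ≤ dist (g^[n] z) z + e := by linarith
        _ ≤ dist (g^[n + 1] z) z := ih2
  intro n
  exact (key n).1

lemma iterate_subadd {g : X → X} (hg : Isometry g) (x : X) (m : ℕ) :
    ∀ k : ℕ, dist (g^[m * k] x) x ≤ (k : ℝ) * dist (g^[m] x) x := by
  intro k
  induction k with
  | zero => simp
  | succ k ih =>
    have h1 : g^[m * (k + 1)] x = g^[m * k] (g^[m] x) := by
      rw [show m * (k + 1) = m * k + m from by ring, Function.iterate_add_apply]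
    have h2 : dist (g^[m * (k + 1)] x) (g^[m * k] x) = dist (g^[m] x) x := by
      rw [h1, (iso_iterate hg (m * k)).dist_eq]
    have ht := dist_triangle (g^[m * (k + 1)] x) (g^[m * k] x) x
    push_cast
    rw [h2] at ht
    linarith

lemma disp_transfer {g : X → X} (hg : Isometry g) (x z : X) :
    dist (g z) z ≤ dist (g x) x + 2 * dist x z := by
  have h2 := dist_triangle (g z) x z
  have h4 := dist_triangle (g z) (g x) z
  have h5 := dist_triangle (g x) x z
  have h3 : dist (g z) (g x) = dist z x := hg.dist_eq z x
  rw [h3] at h4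
  have : dist z x = dist x z := dist_comm z x
  linarith

lemma stableLen_nonneg (f : X → X) (x : X) : 0 ≤ stableLen f x := by
  apply Real.iInf_nonneg
  intro n
  positivity

lemma le_stableLen {f : X → X} {x : X} {e : ℝ}
    (h : ∀ n : ℕ, ((n : ℝ) + 1) * e ≤ dist (f^[n + 1] x) x) : e ≤ stableLen f x := by
  apply le_ciInf
  intro n
  rw [le_div_iff₀ (by positivity)]
  calc e * ((n : ℝ) + 1) = ((n : ℝ) + 1) * e := by ring
    _ ≤ dist (f^[n + 1] x) x := h n

lemma stableLen_le {f : X → X} {x : X} (n : ℕ) :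
    stableLen f x ≤ dist (f^[n + 1] x) x / (n + 1) := by
  apply ciInf_le
  refine ⟨0, ?_⟩
  rintro y ⟨m, rfl⟩
  positivity

/-- Lemma A: a non-hyperbolic isometry satisfies the folding inequality at every point. -/
lemma fold_of_nonhyp {δ : ℝ} (hδ : 0 ≤ δ)
    (hfpc : ∀ x y s t : X, dist x y + dist s t ≤
      max (dist x s + dist y t) (dist x t + dist y s) + 2 * δ)
    {g : X → X} (hg : Isometry g) {x : X} (hsl : stableLen g x ≤ 0) :
    ∀ z : X, dist (g (g z)) z ≤ dist (g z) z + 2 * δ := by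
  intro z
  by_contra hcon
  push_neg at hcon
  set e : ℝ := dist (g (g z)) z - dist (g z) z - 2 * δ with hedef
  have hepos : 0 < e := by simp only [hedef]; linarith
  have he : dist (g (g z)) z = dist (g z) z + 2 * δ + e := by simp only [hedef]; ring
  have hlin := chain_lemma hδ hfpc hg z he hepos
  have hx : ∀ n : ℕ, (n : ℝ) * e ≤ dist (g^[n] x) x := by
    intro n
    by_contra hcn
    push_neg at hcn
    set γ : ℝ := (n : ℝ) * e - dist (g^[n] x) x with hγdef
    have hγ : 0 < γ := by simp only [hγdef]; linarith
    obtain ⟨k, hk⟩ := exists_nat_gt (2 * dist x z / γ)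
    have hk2 : 2 * dist x z / γ < (k : ℝ) := hk
    have h1 : ((n * k : ℕ) : ℝ) * e ≤ dist (g^[n * k] z) z := hlin (n * k)
    have h2 : dist (g^[n * k] z) z ≤ dist (g^[n * k] x) x + 2 * dist x z :=
      disp_transfer (iso_iterate hg (n * k)) x z
    have h3 : dist (g^[n * k] x) x ≤ (k : ℝ) * dist (g^[n] x) x :=
      iterate_subadd hg x n k
    have hkpos : (0 : ℝ) < k := by
      have : (0:ℝ) ≤ 2 * dist x z / γ := by positivity
      linarith
    have : (k : ℝ) * γ ≤ 2 * dist x z := by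
      push_cast at h1
      nlinarith
    rw [div_lt_iff₀ hγ] at hk2
    linarith
  have : e ≤ stableLen g x := by
    apply le_stableLen
    intro n
    have := hx (n + 1)
    push_cast at this ⊢
    linarith
  linarith

lemma core {δ : ℝ} (hδ : 0 ≤ δ)
    (hfpc : ∀ x y s t : X, dist x y + dist s t ≤
      max (dist x s + dist y t) (dist x t + dist y s) + 2 * δ)
    {u v : X → X} (hu : Isometry u) (hv : Isometry v)
    (hus : Function.Surjective u) (hvs : Function.Surjective v)
    (hfu : ∀ z, dist (u (u z)) z ≤ dist (u z) z + 2 * δ)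
    (hfv : ∀ z, dist (v (v z)) z ≤ dist (v z) z + 2 * δ)
    (hfuv : ∀ z, dist (u (v (u (v z)))) z ≤ dist (u (v z)) z + 2 * δ)
    (x : X) :
    dist (u (v x)) x ≤ max (dist (u x) x) (dist (v x) x) + 12 * δ := by
  obtain ⟨a', ha'⟩ := hus x
  obtain ⟨b', hb'⟩ := hvs x
  obtain ⟨p', hp'⟩ := hvs a'
  have hp'x : u (v p') = x := by rw [hp', ha']
  have dA' : dist a' x = dist (u x) x := by
    have h := hu.dist_eq a' x
    rw [ha'] at h
    rw [← h, dist_comm]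
  have dB' : dist b' x = dist (v x) x := by
    have h := hv.dist_eq b' x
    rw [hb'] at h
    rw [← h, dist_comm]
  have dP' : dist p' x = dist (u (v x)) x := by
    have h := hu.dist_eq (v p') (v x)
    rw [hv.dist_eq p' x, hp'x] at h
    rw [← h, dist_comm]
  have dE1 : dist a' (v x) = dist (u (v x)) x := by
    have h := hu.dist_eq a' (v x)
    rw [ha'] at h
    rw [← h, dist_comm]
  have dE2 : dist p' b' = dist (u x) x := by
    have h := hu.dist_eq (v p') (v b')
    rw [hv.dist_eq p' b', hp', hb', ha'] at h
    rw [← h, dist_comm]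
  have dE3 : dist (u (v x)) (u x) = dist (v x) x := hu.dist_eq (v x) x
  have dF1 : dist (u x) a' ≤ dist (u x) x + 2 * δ := by
    calc dist (u x) a' = dist (u (u a')) a' := by rw [ha']
      _ ≤ dist (u a') a' + 2 * δ := hfu a'
      _ = dist (u x) x + 2 * δ := by rw [ha', dist_comm, dA']
  have dF2 : dist (v x) b' ≤ dist (v x) x + 2 * δ := by
    calc dist (v x) b' = dist (v (v b')) b' := by rw [hb']
      _ ≤ dist (v b') b' + 2 * δ := hfv b'
      _ = dist (v x) x + 2 * δ := by rw [hb', dist_comm, dB']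
  have dF3 : dist (u (v x)) p' ≤ dist (u (v x)) x + 2 * δ := by
    calc dist (u (v x)) p' = dist (u (v (u (v p')))) p' := by rw [hp'x]
      _ ≤ dist (u (v p')) p' + 2 * δ := hfuv p'
      _ = dist (u (v x)) x + 2 * δ := by rw [hp'x, dist_comm, dP']
  have E1 : gp x a' (v x) =
      (dist (u x) x + dist (v x) x - dist (u (v x)) x) / 2 := by
    unfold gp; rw [dA', dE1]
  have E2 : gp x p' b' =
      (dist (u (v x)) x + dist (v x) x - dist (u x) x) / 2 := by
    unfold gp; rw [dP', dB', dE2]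
  have E3 : gp x (u (v x)) (u x) =
      (dist (u (v x)) x + dist (u x) x - dist (v x) x) / 2 := by
    unfold gp
    rw [dE3]
  have F1 : dist (u x) x / 2 - δ ≤ gp x (u x) a' := by
    unfold gp
    rw [dA']
    linarith
  have F2 : dist (v x) x / 2 - δ ≤ gp x (v x) b' := by
    unfold gp
    rw [dB']
    linarith
  have F3 : dist (u (v x)) x / 2 - δ ≤ gp x (u (v x)) p' := by
    unfold gp
    rw [dP']
    linarith
  have hA0 : (0:ℝ) ≤ dist (u x) x := dist_nonneg
  have hB0 : (0:ℝ) ≤ dist (v x) x := dist_nonneg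
  have hmA : min (dist (u x) x) (dist (v x) x) ≤ dist (u x) x := min_le_left _ _
  have hmB : min (dist (u x) x) (dist (v x) x) ≤ dist (v x) x := min_le_right _ _
  have hstar : min (dist (u x) x) (dist (v x) x) / 2 - 5 * δ ≤ gp x (u x) (v x) := by
    by_contra hcon
    push_neg at hcon
    have I1 := gromov hfpc x (u x) (v x) a'
    have hP : dist (u x) x + dist (v x) x - 2 * gp x (u x) (v x) - 2 * δ ≤
        dist (u (v x)) x := by
      rcases min_cases (gp x (u x) a') (gp x a' (v x)) with ⟨hm1, _⟩ | ⟨hm1, _⟩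
      · rw [hm1] at I1
        exfalso
        linarith
      · rw [hm1, E1] at I1
        linarith
    have I2 := gromov hfpc x (u (v x)) b' p'
    have I3 := gromov hfpc x (u (v x)) (v x) b'
    have I4 := gromov hfpc x (u x) (v x) (u (v x))
    rw [gp_comm x b' (v x)] at I3
    rw [gp_comm x (u x) (u (v x)), E3] at I4
    rcases min_cases (gp x (u (v x)) p') (gp x p' b') with ⟨h2, _⟩ | ⟨h2, _⟩ <;>
      rw [h2] at I2 <;>
    rcases min_cases (gp x (u (v x)) b') (gp x (v x) b') with ⟨h3, _⟩ | ⟨h3, _⟩ <;>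
      rw [h3] at I3 <;>
    rcases min_cases
        ((dist (u (v x)) x + dist (u x) x - dist (v x) x) / 2)
        (gp x (u (v x)) (v x)) with ⟨h4, _⟩ | ⟨h4, _⟩ <;>
      rw [h4] at I4 <;>
    linarith [F2, F3, E2, hP, hmA, hmB, hδ]
  have I5 := gromov hfpc x a' (v x) (u x)
  rw [gp_comm x a' (u x)] at I5
  have hfin : min (dist (u x) x) (dist (v x) x) / 2 - 6 * δ ≤ gp x a' (v x) := by
    rcases min_cases (gp x (u x) a') (gp x (u x) (v x)) with ⟨h5, _⟩ | ⟨h5, _⟩ <;>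
      rw [h5] at I5 <;> linarith
  rw [E1] at hfin
  have hsum := min_add_max (dist (u x) x) (dist (v x) x)
  linarith

-- continued inside namespace St11
section Disp
variable {X : Type*} [MetricSpace X] {S : Set (X → X)} {x : X} {C : ℝ}

lemma powSet_bound (hS : ∀ f ∈ S, Isometry f ∧ Function.Surjective f)
    (hb : ∀ f ∈ S, dist (f x) x ≤ C) {n : ℕ} :
    ∀ g ∈ powSet S n, dist (g x) x ≤ (n : ℝ) * C := by
  rintro g ⟨l, hl, hmem, rfl⟩
  subst hl
  induction l with
  | nil => simp
  | cons f l ih =>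
    have hf : f ∈ S := hmem f List.mem_cons_self
    have hmem' : ∀ f ∈ l, f ∈ S := fun f hf => hmem f (List.mem_cons_of_mem _ hf)
    have hiso : Isometry f := (hS f hf).1
    set w := l.foldr (· ∘ ·) id with hw
    have h1 : dist ((f :: l).foldr (· ∘ ·) id x) x = dist (f (w x)) x := rfl
    have h2 := dist_triangle (f (w x)) (f x) x
    have h3 : dist (f (w x)) (f x) = dist (w x) x := hiso.dist_eq (w x) x
    have h4 := ih hmem'
    have h5 := hb f hf
    rw [h1]
    push_cast
    rw [h3] at h2
    simp only [List.length_cons]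
    push_cast
    linarith

lemma bddAbove_disp (hS : ∀ f ∈ S, Isometry f ∧ Function.Surjective f)
    (hb : ∀ f ∈ S, dist (f x) x ≤ C) (n : ℕ) :
    BddAbove ((fun f => dist (f x) x) '' (powSet S n)) := by
  refine ⟨(n : ℝ) * C, ?_⟩
  rintro y ⟨g, hg, rfl⟩
  exact powSet_bound hS hb g hg

lemma dispSup_nonneg (n : ℕ) : 0 ≤ dispSup x (powSet S n) := by
  apply Real.sSup_nonneg
  rintro y ⟨g, _, rfl⟩
  exact dist_nonneg

lemma le_dispSup (hS : ∀ f ∈ S, Isometry f ∧ Function.Surjective f)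
    (hb : ∀ f ∈ S, dist (f x) x ≤ C) {n : ℕ} {g : X → X} (hg : g ∈ powSet S n) :
    dist (g x) x ≤ dispSup x (powSet S n) :=
  le_csSup (bddAbove_disp hS hb n) ⟨g, hg, rfl⟩

lemma dispSup_le {c : ℝ} (hc : 0 ≤ c) {n : ℕ}
    (h : ∀ g ∈ powSet S n, dist (g x) x ≤ c) :
    dispSup x (powSet S n) ≤ c := by
  apply Real.sSup_le _ hc
  rintro y ⟨g, hg, rfl⟩
  exact h g hg

lemma jointStable_nonneg : 0 ≤ jointStable S x := by
  apply Real.iInf_nonneg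
  intro n
  have := dispSup_nonneg (S := S) (x := x) (n + 1)
  positivity

lemma jointStable_le' {m : ℕ} (hm : 1 ≤ m) :
    jointStable S x ≤ dispSup x (powSet S m) / m := by
  obtain ⟨k, rfl⟩ : ∃ k, m = k + 1 := ⟨m - 1, by omega⟩
  have : jointStable S x ≤ dispSup x (powSet S (k + 1)) / (k + 1) := by
    apply ciInf_le
    refine ⟨0, ?_⟩
    rintro y ⟨j, rfl⟩
    have := dispSup_nonneg (S := S) (x := x) (j + 1)
    positivity
  simpa using this

end Disp

section Disp2
variable {X : Type*} [MetricSpace X] {S : Set (X → X)} {x : X} {C : ℝ}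

lemma disp_subadd (hS : ∀ f ∈ S, Isometry f ∧ Function.Surjective f)
    (hb : ∀ f ∈ S, dist (f x) x ≤ C) (i j : ℕ) :
    dispSup x (powSet S (i + j)) ≤ dispSup x (powSet S i) + dispSup x (powSet S j) := by
  apply dispSup_le (add_nonneg (dispSup_nonneg i) (dispSup_nonneg j))
  intro g hg
  obtain ⟨u, hu, v, hv, rfl⟩ := powSet_split hg
  have hui := (powSet_iso hS hu).1
  have h1 := dist_triangle ((u ∘ v) x) (u x) x
  have h2 : dist ((u ∘ v) x) (u x) = dist (v x) x := by
    simp only [Function.comp_apply]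
    exact hui.dist_eq (v x) x
  rw [h2] at h1
  have h3 := le_dispSup hS hb hu
  have h4 := le_dispSup hS hb hv
  linarith

lemma disp_mul (hS : ∀ f ∈ S, Isometry f ∧ Function.Surjective f)
    (hb : ∀ f ∈ S, dist (f x) x ≤ C) (j : ℕ) :
    ∀ c : ℕ, dispSup x (powSet S (j * (c + 1))) ≤
      ((c : ℝ) + 1) * dispSup x (powSet S j) := by
  intro c
  induction c with
  | zero => simp
  | succ c ih =>
    have he : j * (c + 1 + 1) = j * (c + 1) + j := by ring
    rw [he]
    have h1 := disp_subadd hS hb (j * (c + 1)) j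
    push_cast
    linarith

end Disp2

end St11

open St11 in
/-- For a bounded set `Σ` of isometries of a `δ`-hyperbolic
metric space, `D(Σ) > 0` iff the semigroup `⋃_{n ≥ 1} Σⁿ` generated by `Σ`
contains an isometry of positive stable length (i.e. a hyperbolic isometry). -/
theorem stmt11 {X : Type*} [MetricSpace X] (δ : ℝ) (hδ : 0 ≤ δ)
    (hfpc : ∀ x y s t : X, dist x y + dist s t ≤
      max (dist x s + dist y t) (dist x t + dist y s) + 2 * δ)
    (S : Set (X → X)) (hS : ∀ f ∈ S, Isometry f ∧ Function.Surjective f)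
    (x : X) (hb : ∃ C : ℝ, ∀ f ∈ S, dist (f x) x ≤ C) :
    0 < jointStable S x ↔
      ∃ n : ℕ, 1 ≤ n ∧ ∃ f ∈ powSet S n, 0 < stableLen f x := by
  obtain ⟨C, hb⟩ := hb
  constructor
  · -- forward direction: joint stable length positive ⇒ hyperbolic element exists
    intro hD
    by_contra hno
    push_neg at hno
    have Hfold : ∀ n : ℕ, 1 ≤ n → ∀ w ∈ powSet S n, ∀ z,
        dist (w (w z)) z ≤ dist (w z) z + 2 * δ := by
      intro n hn w hw
      exact fold_of_nonhyp hδ hfpc (powSet_iso hS hw).1 (hno n hn w hw)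
    set D : ℝ := jointStable S x with hDdef
    obtain ⟨N0, hN0⟩ := exists_nat_gt (24 * δ / D)
    set N : ℕ := N0 + 1 with hNdef
    have hN1 : 1 ≤ N := by omega
    have hNpos : (0:ℝ) < N := by positivity
    have hNR : 24 * δ < (N : ℝ) * D := by
      have h1 : 24 * δ / D < (N : ℝ) := by
        rw [hNdef]; push_cast
        calc 24 * δ / D < (N0 : ℝ) := hN0
          _ ≤ (N0 : ℝ) + 1 := by linarith
      rw [div_lt_iff₀ hD] at h1
      linarith
    -- the key linear-growth bound
    have key : ∀ k : ℕ, dispSup x (powSet S (N * (k + 1))) ≤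
        dispSup x (powSet S N) + 12 * δ * k := by
      intro k
      induction k with
      | zero => simp
      | succ k ih =>
        have hsl : N * (k + 1 + 1) = N * (k + 1) + N := by ring
        rw [hsl]
        have hAnn : (0:ℝ) ≤ dispSup x (powSet S N) := dispSup_nonneg _
        apply dispSup_le (by push_cast; positivity)
        intro g hg
        obtain ⟨u, hu, v, hv, rfl⟩ := powSet_split hg
        have hui := powSet_iso hS hu
        have hvi := powSet_iso hS hv
        have hNk1 : 1 ≤ N * (k + 1) := Nat.mul_pos (by omega) (by omega)
        have hfu := Hfold (N * (k + 1)) hNk1 u hu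
        have hfv := Hfold N hN1 v hv
        have hfw := Hfold (N * (k + 1) + N) (by omega) (u ∘ v) (powSet_comp hu hv)
        have hfuv : ∀ z, dist (u (v (u (v z)))) z ≤ dist (u (v z)) z + 2 * δ := by
          intro z
          simpa [Function.comp_apply] using hfw z
        have hcore := core hδ hfpc hui.1 hvi.1 hui.2 hvi.2 hfu hfv hfuv x
        have hcore' : dist ((u ∘ v) x) x ≤
            max (dist (u x) x) (dist (v x) x) + 12 * δ := by
          simpa [Function.comp_apply] using hcore
        have hub : dist (u x) x ≤ dispSup x (powSet S (N * (k + 1))) :=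
          le_dispSup hS hb hu
        have hvb : dist (v x) x ≤ dispSup x (powSet S N) := le_dispSup hS hb hv
        have hmax : max (dist (u x) x) (dist (v x) x) ≤
            dispSup x (powSet S N) + 12 * δ * k := by
          apply max_le
          · linarith
          · have : (0:ℝ) ≤ 12 * δ * k := by positivity
            linarith
        push_cast
        push_cast at hmax
        linarith
    -- derive the numeric contradiction
    have haN : (0:ℝ) ≤ dispSup x (powSet S N) := dispSup_nonneg _
    obtain ⟨k0, hk0⟩ := exists_nat_gt (2 * dispSup x (powSet S N) / ((N : ℝ) * D))
    have hEpos : (0:ℝ) < (N : ℝ) * D := by positivity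
    have hk0' : 2 * dispSup x (powSet S N) < (k0 : ℝ) * ((N : ℝ) * D) := by
      rw [div_lt_iff₀ hEpos] at hk0
      linarith
    have hM1 : 1 ≤ N * (k0 + 1) := Nat.mul_pos (by omega) (by omega)
    have hle := jointStable_le' (S := S) (x := x) hM1
    have hMpos : (0:ℝ) < ((N * (k0 + 1) : ℕ) : ℝ) := by
      push_cast
      positivity
    rw [le_div_iff₀ hMpos] at hle
    have hkey := key k0
    have hle2 : D * (((N : ℝ)) * ((k0 : ℝ) + 1)) ≤
        dispSup x (powSet S N) + 12 * δ * k0 := by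
      have hcast : ((N * (k0 + 1) : ℕ) : ℝ) = (N : ℝ) * ((k0 : ℝ) + 1) := by push_cast; ring
      rw [hcast] at hle
      linarith
    -- contradiction via nonlinear arithmetic
    have hk0nn : (0:ℝ) ≤ (k0 : ℝ) := Nat.cast_nonneg k0
    nlinarith [mul_nonneg hk0nn (le_of_lt (show (0:ℝ) < (N:ℝ) * D - 24 * δ by linarith))]
  · -- backward direction
    rintro ⟨n, hn, f, hf, hL⟩
    have hnpos : (0:ℝ) < n := by positivity
    have hLn : 0 < stableLen f x / n := by positivity
    refine lt_of_lt_of_le hLn ?_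
    apply le_ciInf
    intro mIdx
    have hjpos : (0:ℝ) < (mIdx : ℝ) + 1 := by positivity
    have h1 := stableLen_le (f := f) (x := x) mIdx
    rw [le_div_iff₀ hjpos] at h1
    have h3 : f^[mIdx + 1] ∈ powSet S (n * (mIdx + 1)) := powSet_iterate hf (mIdx + 1)
    have h4 : stableLen f x * ((mIdx : ℝ) + 1) ≤ dispSup x (powSet S (n * (mIdx + 1))) :=
      h1.trans (le_dispSup hS hb h3)
    have h5 : dispSup x (powSet S (n * (mIdx + 1))) ≤
        (n : ℝ) * dispSup x (powSet S (mIdx + 1)) := by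
      obtain ⟨c, rfl⟩ : ∃ c, n = c + 1 := ⟨n - 1, by omega⟩
      have hdm := disp_mul hS hb (mIdx + 1) c
      rw [show (c + 1) * (mIdx + 1) = (mIdx + 1) * (c + 1) from by ring]
      push_cast
      push_cast at hdm
      linarith
    rw [div_le_div_iff₀ hnpos hjpos]
    nlinarith [dispSup_nonneg (S := S) (x := x) (mIdx + 1)]
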